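/- arXiv:math-ph/0605050 — 2 statements merged into one kernel-verified Lean document; each statement's English description precedes it below -/
import Mathlib

section
/- Gap inequality for the WKB action: let Q : ℝ → ℝ be even, continuous, integrable, strictly decreasing on [0,∞) with unique maximum at 0. For 0 < η ≤ √(Q(0)) let x₊(η) ≥ 0 be the unique point with Q(x₊(η)) = η², set x₋(η) = −x₊(η), and define the action Φ(η) = ∫_{x₋(η)}^{x₊(η)} (Q(y) − η²)^{1/2} dy. Then for all 0 < η' < η ≤ √(Q(0)): Φ(η') − Φ(η) ≤ (η − η')^{1/2} · (η + η')^{1/2} · ( x₊(η') − x₋(η') ). -/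
open MeasureTheory Set

/-- **Gap inequality for the WKB action.** For an even, continuous, integrable potential `Q`,
strictly decreasing on `[0,∞)`, with turning points `x₊(η) ≥ 0` satisfying `Q(x₊(η)) = η²`
and `x₋(η) = -x₊(η)`, the action `Φ(η) = ∫_{x₋(η)}^{x₊(η)} √(Q(y) - η²) dy` satisfies, for
`0 < η' < η ≤ √(Q 0)`:
`Φ(η') - Φ(η) ≤ (η - η')^{1/2} (η + η')^{1/2} (x₊(η') - x₋(η'))`. -/
theorem stmt_9 (Q : ℝ → ℝ) (hQeven : ∀ x : ℝ, Q (-x) = Q x) (hQc : Continuous Q)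
    (hQint : Integrable Q)
    (hQdec : StrictAntiOn Q (Ici 0))
    (xp : ℝ → ℝ)
    (hxp : ∀ η : ℝ, 0 < η → η ≤ Real.sqrt (Q 0) → 0 ≤ xp η ∧ Q (xp η) = η ^ 2)
    (η' η : ℝ) (h1 : 0 < η') (h2 : η' < η) (h3 : η ≤ Real.sqrt (Q 0)) :
    (∫ y in (-(xp η'))..(xp η'), Real.sqrt (Q y - η' ^ 2)) -
      (∫ y in (-(xp η))..(xp η), Real.sqrt (Q y - η ^ 2)) ≤
    Real.sqrt (η - η') * Real.sqrt (η + η') * (xp η' - (-(xp η'))) := by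
  obtain ⟨hb0, hQb⟩ := hxp η (h1.trans h2) h3
  obtain ⟨ha0, hQa⟩ := hxp η' h1 (h2.le.trans h3)
  set a := xp η' with ha
  set b := xp η with hbdef
  have hηη : η' ^ 2 < η ^ 2 := by nlinarith
  have hba : b ≤ a := by
    by_contra h
    push_neg at h
    have := hQdec (mem_Ici.mpr ha0) (mem_Ici.mpr hb0) h
    rw [hQa, hQb] at this; linarith
  set c := Real.sqrt (η ^ 2 - η' ^ 2) with hc
  have hc0 : 0 ≤ c := Real.sqrt_nonneg _
  have hcsplit : Real.sqrt (η - η') * Real.sqrt (η + η') = c := by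
    rw [hc, ← Real.sqrt_mul (by linarith)]
    ring_nf
  have hQanti : AntitoneOn Q (Ici 0) := hQdec.antitoneOn
  -- pointwise bounds
  have houter : ∀ y ∈ Icc b a, Real.sqrt (Q y - η' ^ 2) ≤ c := by
    intro y hy
    have hy0 : (0:ℝ) ≤ y := hb0.trans hy.1
    have : Q y ≤ Q b := hQanti (mem_Ici.mpr hb0) (mem_Ici.mpr hy0) hy.1
    exact Real.sqrt_le_sqrt (by rw [hQb] at this; linarith)
  have houter' : ∀ y ∈ Icc (-a) (-b), Real.sqrt (Q y - η' ^ 2) ≤ c := by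
    intro y hy
    have : Q y = Q (-y) := (hQeven y).symm
    rw [this]
    exact houter (-y) ⟨by linarith [hy.2], by linarith [hy.1]⟩
  have hinner : ∀ y ∈ Icc (-b) b,
      Real.sqrt (Q y - η' ^ 2) - Real.sqrt (Q y - η ^ 2) ≤ c := by
    intro y hy
    have hQy : η ^ 2 ≤ Q y := by
      rcases le_or_gt 0 y with h | h
      · have : Q y ≥ Q b := hQanti (mem_Ici.mpr h) (mem_Ici.mpr hb0) hy.2
        rw [hQb] at this; linarith
      · have h1' : -y ≤ b := by linarith [hy.1]
        have : Q (-y) ≥ Q b := hQanti (mem_Ici.mpr (by linarith)) (mem_Ici.mpr hb0) h1'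
        rw [hQeven y, hQb] at this; linarith
    set u := Q y - η ^ 2 with hu
    have hu0 : 0 ≤ u := by linarith
    have hv0 : (0:ℝ) ≤ η ^ 2 - η' ^ 2 := by linarith
    have key : Real.sqrt (Q y - η' ^ 2) ≤ Real.sqrt u + c := by
      have h1'' : Q y - η' ^ 2 ≤ (Real.sqrt u + c) ^ 2 := by
        have e1 := Real.sq_sqrt hu0
        have e2 := Real.sq_sqrt hv0
        nlinarith [Real.sqrt_nonneg u, mul_nonneg (Real.sqrt_nonneg u) hc0]
      calc Real.sqrt (Q y - η' ^ 2) ≤ Real.sqrt ((Real.sqrt u + c) ^ 2) :=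
            Real.sqrt_le_sqrt h1''
        _ = Real.sqrt u + c := Real.sqrt_sq (by positivity)
    linarith
  -- integrability
  have hcont : Continuous fun y => Real.sqrt (Q y - η' ^ 2) :=
    (hQc.sub continuous_const).sqrt
  have hcont2 : Continuous fun y => Real.sqrt (Q y - η ^ 2) :=
    (hQc.sub continuous_const).sqrt
  have hI1 : IntervalIntegrable (fun y => Real.sqrt (Q y - η' ^ 2)) volume (-a) (-b) :=
    hcont.intervalIntegrable _ _
  have hI2 : IntervalIntegrable (fun y => Real.sqrt (Q y - η' ^ 2)) volume (-b) b :=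
    hcont.intervalIntegrable _ _
  have hI3 : IntervalIntegrable (fun y => Real.sqrt (Q y - η' ^ 2)) volume b a :=
    hcont.intervalIntegrable _ _
  have hJ : IntervalIntegrable (fun y => Real.sqrt (Q y - η ^ 2)) volume (-b) b :=
    hcont2.intervalIntegrable _ _
  -- split the integral
  have hsplit : (∫ y in (-a)..a, Real.sqrt (Q y - η' ^ 2)) =
      (∫ y in (-a)..(-b), Real.sqrt (Q y - η' ^ 2)) +
      (∫ y in (-b)..b, Real.sqrt (Q y - η' ^ 2)) +
      (∫ y in b..a, Real.sqrt (Q y - η' ^ 2)) := by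
    rw [intervalIntegral.integral_add_adjacent_intervals hI1 hI2,
      intervalIntegral.integral_add_adjacent_intervals (hI1.trans hI2) hI3]
  have hab' : -a ≤ -b := by linarith
  have hbb : -b ≤ b := by linarith
  -- bound the three pieces
  have hB1 : (∫ y in (-a)..(-b), Real.sqrt (Q y - η' ^ 2)) ≤ (-b + a) * c := by
    have := intervalIntegral.integral_mono_on hab' hI1
      (intervalIntegrable_const (c := c)) houter'
    simpa [intervalIntegral.integral_const, smul_eq_mul, sub_neg_eq_add] using this
  have hB3 : (∫ y in b..a, Real.sqrt (Q y - η' ^ 2)) ≤ (a - b) * c := by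
    have := intervalIntegral.integral_mono_on hba hI3
      (intervalIntegrable_const (c := c)) houter
    simpa [intervalIntegral.integral_const, smul_eq_mul] using this
  have hB2 : (∫ y in (-b)..b, Real.sqrt (Q y - η' ^ 2)) -
      (∫ y in (-b)..b, Real.sqrt (Q y - η ^ 2)) ≤ 2 * b * c := by
    rw [← intervalIntegral.integral_sub hI2 hJ]
    have := intervalIntegral.integral_mono_on hbb (hI2.sub hJ)
      (intervalIntegrable_const (c := c)) hinner
    simpa [intervalIntegral.integral_const, smul_eq_mul, sub_neg_eq_add, two_mul] using this
  rw [hcsplit, hsplit]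
  have : c * (a - -a) = 2 * a * c := by ring
  rw [this]
  linarith
end

section
/- Positivity of the real part of the quadratic form of the kernel operator: for every x > 0, every w ∈ ℂ with Re w > 0, and every h ∈ L²([0,x];ℂ), one has Re ∫₀^x conj(h(y)) ( ∫₀^x h(s)·Φ(s,y,w) ds ) dy ≥ 0. Consequently the operator Id + K_{x,w} on L²([0,x]), where K_{x,w}(h)(y) = ∫₀^x h(s)Φ(s,y,w)ds, has trivial kernel. -/
open MeasureTheory Set

noncomputable section

/-- The kernel `Φ(x,y,w) = ∫₀^∞ (sin kx / k)(sin ky / k)(√(k²+w) − k)(2k/π) dk`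
(principal branch of the complex square root). -/
def Phi (x y : ℝ) (w : ℂ) : ℂ :=
  ∫ k in Ioi (0:ℝ),
    ((Real.sin (k * x) / k : ℝ) : ℂ) * ((Real.sin (k * y) / k : ℝ) : ℂ) *
      (((k : ℂ) ^ 2 + w) ^ ((1 : ℂ) / 2) - (k : ℂ)) * ((2 * k / Real.pi : ℝ) : ℂ)

-- basic sqrt lemma
lemma re_sqrt_ge (w : ℂ) (hw : 0 < w.re) (k : ℝ) (hk : 0 ≤ k) :
    k ≤ (((k:ℂ)^2 + w) ^ ((1:ℂ)/2)).re := by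
  set z : ℂ := (k:ℂ)^2 + w with hzdef
  have hzre : z.re = k^2 + w.re := by simp [hzdef]; norm_cast
  have hz0 : z ≠ 0 := by
    intro h0
    rw [h0] at hzre
    simp only [Complex.zero_re] at hzre
    nlinarith
  set s : ℂ := z ^ ((1:ℂ)/2) with hsdef
  have hs2 : s ^ 2 = z := by
    rw [hsdef]
    have : ((1:ℂ)/2) = ((2:ℕ):ℂ)⁻¹ := by norm_num
    rw [this]
    exact Complex.cpow_nat_inv_pow z (by norm_num)
  have hsre0 : 0 ≤ s.re := by
    rw [hsdef, Complex.cpow_def_of_ne_zero hz0, Complex.exp_re]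
    apply mul_nonneg (Real.exp_pos _).le
    have him : (Complex.log z * ((1:ℂ)/2)).im = z.arg / 2 := by
      simp [Complex.mul_im, Complex.log_im]
      ring
    rw [him]
    apply Real.cos_nonneg_of_mem_Icc
    constructor
    · linarith [Complex.neg_pi_lt_arg z, Real.pi_pos]
    · linarith [Complex.arg_le_pi z]
  have habs : s.re^2 + s.im^2 = ‖z‖ := by
    have h1 : ‖s‖ ^ 2 = ‖z‖ := by
      rw [← norm_pow, hs2]
    rw [← h1, Complex.sq_norm, Complex.normSq_apply]; ring
  have hre : s.re^2 - s.im^2 = z.re := by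
    have : (s^2).re = z.re := by rw [hs2]
    rw [pow_two, Complex.mul_re] at this
    linarith [this]
  have hge : z.re ≤ ‖z‖ := Complex.re_le_norm z
  nlinarith [hzre, hw]

noncomputable def cc (w : ℂ) (k : ℝ) : ℂ :=
  (((k:ℂ)^2 + w) ^ ((1:ℂ)/2) - k) * ((2*k/Real.pi : ℝ) : ℂ)

lemma cc_re_nonneg (w : ℂ) (hw : 0 < w.re) (k : ℝ) (hk : 0 < k) : 0 ≤ (cc w k).re := by
  rw [cc, Complex.mul_re]
  simp only [Complex.ofReal_re, Complex.ofReal_im, mul_zero, sub_zero, Complex.sub_re,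
    Complex.ofReal_re, Complex.sub_im]
  have h1 := re_sqrt_ge w hw k hk.le
  have h2 : 0 ≤ 2*k/Real.pi := by positivity
  nlinarith

lemma cc_norm_le (w : ℂ) (hw : 0 < w.re) (k : ℝ) (hk : 0 < k) :
    ‖cc w k‖ ≤ ‖w‖ / Real.pi := by
  set s : ℂ := ((k:ℂ)^2 + w) ^ ((1:ℂ)/2) with hsdef
  have hs2 : s ^ 2 = (k:ℂ)^2 + w := by
    rw [hsdef]
    have : ((1:ℂ)/2) = ((2:ℕ):ℂ)⁻¹ := by norm_num
    rw [this]
    exact Complex.cpow_nat_inv_pow _ (by norm_num)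
  have hfact : (s - k) * (s + k) = w := by
    have : (s - k) * (s + k) = s^2 - (k:ℂ)^2 := by ring
    rw [this, hs2]; ring
  have hrege : (k:ℝ) ≤ s.re := re_sqrt_ge w hw k hk.le
  have habs2 : 2*k ≤ ‖s + k‖ := by
    calc 2*k ≤ (s + k).re := by simp [Complex.add_re]; linarith
    _ ≤ ‖s + k‖ := Complex.re_le_norm _
  have habs2' : (0:ℝ) < ‖s + k‖ := by linarith
  have hstep : ‖s - k‖ ≤ ‖w‖ / (2*k) := by
    rw [← hfact, norm_mul, le_div_iff₀ (by positivity : (0:ℝ) < 2*k)]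
    apply mul_le_mul_of_nonneg_left habs2
    positivity
  have hkpi : |2*k/Real.pi| = 2*k/Real.pi := abs_of_nonneg (by positivity)
  have : ‖cc w k‖ = ‖s - k‖ * (2*k/Real.pi) := by
    rw [cc, ← hsdef]
    rw [norm_mul, Complex.norm_real, Real.norm_eq_abs, hkpi]
  rw [this]
  calc ‖s - k‖ * (2*k/Real.pi) ≤ (‖w‖ / (2*k)) * (2*k/Real.pi) := by
        apply mul_le_mul_of_nonneg_right hstep (by positivity)
    _ = ‖w‖ / Real.pi := by
        field_simp

lemma psi_abs_le (x : ℝ) (s : ℝ) (hs : s ∈ Ioc 0 x) (k : ℝ) (hk : 0 < k) :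
    |Real.sin (k * s) / k| ≤ min x (1/k) := by
  rw [abs_div, abs_of_pos hk]
  rcases le_total x (1/k) with hmin | hmin
  · rw [min_eq_left hmin, div_le_iff₀ hk]
    calc |Real.sin (k*s)| ≤ |k*s| := Real.abs_sin_le_abs
      _ = k * s := abs_of_pos (by nlinarith [hs.1])
      _ ≤ x * k := by nlinarith [hs.2, hs.1]
  · rw [min_eq_right hmin, div_le_div_iff₀ hk hk, one_mul]
    calc |Real.sin (k*s)| * k ≤ 1 * k := by
          apply mul_le_mul_of_nonneg_right (Real.abs_sin_le_one _) hk.le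
      _ = k := one_mul k

lemma g_integrable (x : ℝ) (hx : 0 < x) :
    IntegrableOn (fun k => min x (1/k) ^ 2) (Ioi (0:ℝ)) := by
  have hsplit : Ioi (0:ℝ) = Ioc 0 x⁻¹ ∪ Ioi x⁻¹ := (Ioc_union_Ioi_eq_Ioi (by positivity)).symm
  rw [hsplit]
  apply IntegrableOn.union
  · apply Integrable.mono' (integrable_const (x^2))
    · apply Measurable.aestronglyMeasurable
      exact ((measurable_const.min (measurable_const.div measurable_id)).pow measurable_const)
    · filter_upwards [ae_restrict_mem measurableSet_Ioc] with k hk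
      have hk0 : 0 < k := hk.1
      have h1 : 0 < (1:ℝ)/k := by positivity
      have h2 : 0 ≤ min x (1/k) := le_min hx.le h1.le
      have h3 : min x (1/k) ≤ x := min_le_left _ _
      rw [Real.norm_eq_abs, _root_.abs_of_nonneg (sq_nonneg _)]
      nlinarith
  · apply Integrable.mono' (integrableOn_Ioi_rpow_of_lt (by norm_num : (-2:ℝ) < -1) (by positivity : (0:ℝ) < x⁻¹))
    · apply Measurable.aestronglyMeasurable
      exact ((measurable_const.min (measurable_const.div measurable_id)).pow measurable_const)
    · filter_upwards [ae_restrict_mem measurableSet_Ioi] with k hk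
      have hk0 : 0 < k := lt_trans (by positivity) hk
      have h1 : 0 < (1:ℝ)/k := by positivity
      have h2 : 0 ≤ min x (1/k) := le_min hx.le h1.le
      have h3 : min x (1/k) ≤ 1/k := min_le_right _ _
      rw [Real.norm_eq_abs, _root_.abs_of_nonneg (sq_nonneg _)]
      have : k ^ (-2:ℝ) = (1/k)^2 := by
        rw [Real.rpow_neg hk0.le]
        rw [show ((2:ℝ) = ((2:ℕ):ℝ)) by norm_num, Real.rpow_natCast]
        field_simp
      rw [this]
      nlinarith

noncomputable def phik (w : ℂ) (s y k : ℝ) : ℂ :=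
  ((Real.sin (k * s) / k : ℝ) : ℂ) * ((Real.sin (k * y) / k : ℝ) : ℂ) *
      (((k : ℂ) ^ 2 + w) ^ ((1 : ℂ) / 2) - (k : ℂ)) * ((2 * k / Real.pi : ℝ) : ℂ)

lemma Phi_eq (s y : ℝ) (w : ℂ) : Phi s y w = ∫ k in Ioi (0:ℝ), phik w s y k := rfl

lemma phik_eq (w : ℂ) (s y k : ℝ) :
    phik w s y k = ((Real.sin (k * s) / k : ℝ) : ℂ) * ((Real.sin (k * y) / k : ℝ) : ℂ) * cc w k := by
  rw [phik, cc]; ring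

lemma phik_meas (w : ℂ) : Measurable (fun q : (ℝ × ℝ) × ℝ => phik w q.1.1 q.1.2 q.2) := by
  unfold phik
  apply Measurable.mul
  apply Measurable.mul
  apply Measurable.mul
  · exact Complex.measurable_ofReal.comp
      (((measurable_snd.mul (measurable_fst.comp measurable_fst))).sin.div measurable_snd)
  · exact Complex.measurable_ofReal.comp
      (((measurable_snd.mul (measurable_snd.comp measurable_fst))).sin.div measurable_snd)
  · apply Measurable.sub
    · exact (((Complex.measurable_ofReal.comp measurable_snd).pow measurable_const).add
        measurable_const).pow measurable_const
    · exact Complex.measurable_ofReal.comp measurable_snd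
  · exact Complex.measurable_ofReal.comp
      ((measurable_const.mul measurable_snd).div measurable_const)

lemma phik_norm_le (x : ℝ) (hx : 0 < x) (w : ℂ) (hw : 0 < w.re) (s y : ℝ)
    (hs : s ∈ Ioc 0 x) (hy : y ∈ Ioc 0 x) (k : ℝ) (hk : 0 < k) :
    ‖phik w s y k‖ ≤ ‖w‖ / Real.pi * min x (1/k) ^ 2 := by
  rw [phik_eq]
  have h1 := psi_abs_le x s hs k hk
  have h2 := psi_abs_le x y hy k hk
  have h3 := cc_norm_le w hw k hk
  have hm : 0 ≤ min x (1/k) := le_min hx.le (by positivity)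
  have hw0 : (0:ℝ) ≤ ‖w‖ / Real.pi := by positivity
  rw [norm_mul, norm_mul, Complex.norm_real, Complex.norm_real, Real.norm_eq_abs,
    Real.norm_eq_abs]
  calc |Real.sin (k * s) / k| * |Real.sin (k * y) / k| * ‖cc w k‖
      ≤ min x (1/k) * min x (1/k) * (‖w‖ / Real.pi) := by
        apply mul_le_mul (mul_le_mul h1 h2 (abs_nonneg _) hm) h3 (norm_nonneg _)
        positivity
    _ = ‖w‖ / Real.pi * min x (1/k) ^ 2 := by ring

lemma Phi_sm (w : ℂ) : StronglyMeasurable (fun p : ℝ × ℝ => Phi p.1 p.2 w) :=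
  ((phik_meas w).stronglyMeasurable).integral_prod_right'

lemma phik_meas' (w : ℂ) : Measurable (fun q : (ℝ × ℝ) × ℝ => phik w q.1.2 q.1.1 q.2) := by
  unfold phik
  apply Measurable.mul
  apply Measurable.mul
  apply Measurable.mul
  · exact Complex.measurable_ofReal.comp
      (((measurable_snd.mul (measurable_snd.comp measurable_fst))).sin.div measurable_snd)
  · exact Complex.measurable_ofReal.comp
      (((measurable_snd.mul (measurable_fst.comp measurable_fst))).sin.div measurable_snd)
  · apply Measurable.sub
    · exact (((Complex.measurable_ofReal.comp measurable_snd).pow measurable_const).add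
        measurable_const).pow measurable_const
    · exact Complex.measurable_ofReal.comp measurable_snd
  · exact Complex.measurable_ofReal.comp
      ((measurable_const.mul measurable_snd).div measurable_const)

lemma Phi_sm' (w : ℂ) : StronglyMeasurable (fun p : ℝ × ℝ => Phi p.2 p.1 w) :=
  ((phik_meas' w).stronglyMeasurable).integral_prod_right'

noncomputable def CC (x : ℝ) (w : ℂ) : ℝ := ∫ k in Ioi (0:ℝ), ‖w‖ / Real.pi * min x (1/k) ^ 2

lemma gC_integrable (x : ℝ) (hx : 0 < x) (w : ℂ) :
    IntegrableOn (fun k => ‖w‖ / Real.pi * min x (1/k) ^ 2) (Ioi (0:ℝ)) :=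
  (g_integrable x hx).const_mul _

lemma CC_nonneg (x : ℝ) (hx : 0 < x) (w : ℂ) : 0 ≤ CC x w := by
  apply integral_nonneg
  intro k
  have : 0 ≤ min x (1/k) ^ 2 := sq_nonneg _
  positivity

lemma Phi_norm_le (x : ℝ) (hx : 0 < x) (w : ℂ) (hw : 0 < w.re) (s y : ℝ)
    (hs : s ∈ Ioc 0 x) (hy : y ∈ Ioc 0 x) : ‖Phi s y w‖ ≤ CC x w := by
  rw [Phi_eq, CC]
  apply norm_integral_le_of_norm_le (gC_integrable x hx w)
  filter_upwards [ae_restrict_mem measurableSet_Ioi] with k hk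
  exact phik_norm_le x hx w hw s y hs hy k hk

lemma cc_meas (w : ℂ) : Measurable (cc w) := by
  unfold cc
  apply Measurable.mul
  · exact (((Complex.measurable_ofReal.pow measurable_const).add measurable_const).pow
      measurable_const).sub Complex.measurable_ofReal
  · exact Complex.measurable_ofReal.comp ((measurable_const.mul measurable_id).div measurable_const)

noncomputable def GG (w : ℂ) (h : ℝ → ℂ) (q : (ℝ × ℝ) × ℝ) : ℂ :=
  ((starRingEnd ℂ) (h q.1.1) * ((Real.sin (q.2 * q.1.1) / q.2 : ℝ) : ℂ)) *
    ((h q.1.2 * ((Real.sin (q.2 * q.1.2) / q.2 : ℝ) : ℂ)) * cc w q.2)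

section master

variable {x : ℝ} {w : ℂ} {h : ℝ → ℂ}

lemma master (hx : 0 < x) (hw : 0 < w.re) (hsm : StronglyMeasurable h)
    (hh : MemLp h 2 (volume.restrict (Ioc (0:ℝ) x))) :
    (0 ≤ (∫ y in Ioc (0:ℝ) x,
        (starRingEnd ℂ) (h y) * ∫ s in Ioc (0:ℝ) x, h s * Phi s y w).re) ∧
    ((∀ᵐ y ∂(volume.restrict (Ioc (0:ℝ) x)),
        h y + (∫ s in Ioc (0:ℝ) x, h s * Phi s y w) = 0) →
      ∀ᵐ y ∂(volume.restrict (Ioc (0:ℝ) x)), h y = 0) := by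
  set ν : Measure ℝ := volume.restrict (Ioc (0:ℝ) x) with hν
  set μ0 : Measure ℝ := volume.restrict (Ioi (0:ℝ)) with hμ0
  haveI : IsFiniteMeasure ν := by
    constructor
    rw [hν, Measure.restrict_apply_univ, Real.volume_Ioc]
    exact ENNReal.ofReal_lt_top
  have hL1 : Integrable h ν := hh.integrable (by norm_num)
  -- strong measurability of various maps
  have hconj : StronglyMeasurable (fun y => (starRingEnd ℂ) (h y)) :=
    RCLike.continuous_conj.comp_stronglyMeasurable hsm
  have hFsm : StronglyMeasurable (fun p : ℝ × ℝ =>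
      (starRingEnd ℂ) (h p.1) * (h p.2 * Phi p.2 p.1 w)) := by
    apply StronglyMeasurable.mul
    · exact hconj.comp_measurable measurable_fst
    · exact (hsm.comp_measurable measurable_snd).mul (Phi_sm' w)
  have hprodrestrict : ν.prod ν = (volume.prod volume).restrict (Ioc 0 x ×ˢ Ioc 0 x) :=
    Measure.prod_restrict _ _
  -- integrability of the double-integral integrand
  have hFint : Integrable (fun p : ℝ × ℝ =>
      (starRingEnd ℂ) (h p.1) * (h p.2 * Phi p.2 p.1 w)) (ν.prod ν) := by
    apply Integrable.mono' (((hL1.norm.const_mul (CC x w)).mul_prod hL1.norm))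
      hFsm.aestronglyMeasurable
    rw [hprodrestrict]
    filter_upwards [ae_restrict_mem (measurableSet_Ioc.prod measurableSet_Ioc)] with p hp
    have hb := Phi_norm_le x hx w hw p.2 p.1 hp.2 hp.1
    rw [norm_mul, norm_mul, RCLike.norm_conj]
    calc ‖h p.1‖ * (‖h p.2‖ * ‖Phi p.2 p.1 w‖) ≤ ‖h p.1‖ * (‖h p.2‖ * CC x w) := by
          gcongr
      _ = CC x w * ‖h p.1‖ * ‖h p.2‖ := by ring
  have hGsm : StronglyMeasurable (GG w h) := by
    unfold GG
    apply StronglyMeasurable.mul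
    · apply StronglyMeasurable.mul
      · exact hconj.comp_measurable (measurable_fst.comp measurable_fst)
      · apply Measurable.stronglyMeasurable
        exact Complex.measurable_ofReal.comp
          ((measurable_snd.mul ((measurable_fst.comp measurable_fst))).sin.div measurable_snd)
    · apply StronglyMeasurable.mul
      · apply StronglyMeasurable.mul
        · exact hsm.comp_measurable (measurable_snd.comp measurable_fst)
        · apply Measurable.stronglyMeasurable
          exact Complex.measurable_ofReal.comp
            ((measurable_snd.mul ((measurable_snd.comp measurable_fst))).sin.div measurable_snd)
      · exact ((cc_meas w).comp measurable_snd).stronglyMeasurable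
  have htriple : (ν.prod ν).prod μ0
      = ((volume.prod volume).prod volume).restrict ((Ioc 0 x ×ˢ Ioc 0 x) ×ˢ Ioi 0) := by
    rw [hprodrestrict, hμ0, Measure.prod_restrict]
  have hGint : Integrable (GG w h) ((ν.prod ν).prod μ0) := by
    apply Integrable.mono'
      (((hL1.norm.mul_prod hL1.norm).mul_prod (gC_integrable x hx w)))
      hGsm.aestronglyMeasurable
    rw [htriple]
    filter_upwards [ae_restrict_mem (((measurableSet_Ioc.prod measurableSet_Ioc)).prod
      measurableSet_Ioi)] with q hq
    obtain ⟨⟨hy, hs⟩, hk⟩ := hq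
    have hk0 : (0:ℝ) < q.2 := hk
    have h1 := psi_abs_le x q.1.1 hy q.2 hk0
    have h2 := psi_abs_le x q.1.2 hs q.2 hk0
    have h3 := cc_norm_le w hw q.2 hk0
    have hm : 0 ≤ min x (1/q.2) := le_min hx.le (by positivity)
    unfold GG
    simp only [norm_mul, RCLike.norm_conj, Complex.norm_real, Real.norm_eq_abs]
    calc ‖h q.1.1‖ * |Real.sin (q.2 * q.1.1) / q.2| *
          (‖h q.1.2‖ * |Real.sin (q.2 * q.1.2) / q.2| * ‖cc w q.2‖)
        ≤ ‖h q.1.1‖ * min x (1/q.2) * (‖h q.1.2‖ * min x (1/q.2) * (‖w‖ / Real.pi)) := by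
          gcongr
      _ = ‖h q.1.1‖ * ‖h q.1.2‖ * (‖w‖ / Real.pi * min x (1/q.2) ^ 2) := by ring
  -- pointwise evaluation of the inner double integral
  set B : ℝ → ℂ := fun k => ∫ s, h s * ((Real.sin (k * s) / k : ℝ) : ℂ) ∂ν with hB
  have hGpoint : ∀ k : ℝ, (∫ p : ℝ × ℝ, GG w h (p, k) ∂(ν.prod ν))
      = ((‖B k‖ ^ 2 : ℝ) : ℂ) * cc w k := by
    intro k
    have h1 : (∫ p : ℝ × ℝ, GG w h (p, k) ∂(ν.prod ν))
        = (∫ y, (starRingEnd ℂ) (h y) * ((Real.sin (k * y) / k : ℝ) : ℂ) ∂ν) *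
          (∫ s, (h s * ((Real.sin (k * s) / k : ℝ) : ℂ)) * cc w k ∂ν) :=
      integral_prod_mul (fun y => (starRingEnd ℂ) (h y) * ((Real.sin (k * y) / k : ℝ) : ℂ))
        (fun s => (h s * ((Real.sin (k * s) / k : ℝ) : ℂ)) * cc w k)
    rw [h1]
    have h2 : (∫ y, (starRingEnd ℂ) (h y) * ((Real.sin (k * y) / k : ℝ) : ℂ) ∂ν)
        = (starRingEnd ℂ) (B k) := by
      rw [hB, ← integral_conj]
      refine integral_congr_ae (Filter.Eventually.of_forall fun y => ?_)
      simp only [map_mul, Complex.conj_ofReal]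
    have h3 : (∫ s, (h s * ((Real.sin (k * s) / k : ℝ) : ℂ)) * cc w k ∂ν)
        = B k * cc w k := integral_mul_const _ _
    rw [h2, h3, ← mul_assoc]
    congr 1
    rw [mul_comm ((starRingEnd ℂ) (B k)) (B k), Complex.mul_conj, Complex.normSq_eq_norm_sq]
  -- the key identity
  have key : (∫ y, (starRingEnd ℂ) (h y) * ∫ s, h s * Phi s y w ∂ν ∂ν)
      = ∫ k, ((‖B k‖ ^ 2 : ℝ) : ℂ) * cc w k ∂μ0 := by
    calc (∫ y, (starRingEnd ℂ) (h y) * ∫ s, h s * Phi s y w ∂ν ∂ν)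
        = ∫ p : ℝ × ℝ, (starRingEnd ℂ) (h p.1) * (h p.2 * Phi p.2 p.1 w) ∂(ν.prod ν) := by
          rw [integral_prod _ hFint]
          refine integral_congr_ae (Filter.Eventually.of_forall fun y => ?_)
          show (starRingEnd ℂ) (h y) * (∫ s, h s * Phi s y w ∂ν)
              = ∫ s, (starRingEnd ℂ) (h y) * (h s * Phi s y w) ∂ν
          exact (integral_const_mul _ _).symm
      _ = ∫ p : ℝ × ℝ, ∫ k, GG w h (p, k) ∂μ0 ∂(ν.prod ν) := by
          refine integral_congr_ae (Filter.Eventually.of_forall fun p => ?_)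
          show (starRingEnd ℂ) (h p.1) * (h p.2 * Phi p.2 p.1 w) = ∫ k, GG w h (p, k) ∂μ0
          rw [Phi_eq, ← integral_const_mul, ← integral_const_mul]
          refine integral_congr_ae (Filter.Eventually.of_forall fun k => ?_)
          show (starRingEnd ℂ) (h p.1) * (h p.2 * phik w p.2 p.1 k) = GG w h (p, k)
          simp only [GG, phik_eq]
          ring
      _ = ∫ k, ∫ p : ℝ × ℝ, GG w h (p, k) ∂(ν.prod ν) ∂μ0 := integral_integral_swap hGint
      _ = ∫ k, ((‖B k‖ ^ 2 : ℝ) : ℂ) * cc w k ∂μ0 := by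
          refine integral_congr_ae (Filter.Eventually.of_forall fun k => ?_)
          exact hGpoint k
  have hIk : Integrable (fun k => ((‖B k‖ ^ 2 : ℝ) : ℂ) * cc w k) μ0 := by
    have h0 : Integrable (fun k : ℝ => ∫ p : ℝ × ℝ, GG w h (p, k) ∂(ν.prod ν)) μ0 :=
      hGint.integral_prod_right
    refine h0.congr (Filter.Eventually.of_forall fun k => ?_)
    exact hGpoint k
  -- positivity of the real part
  have hpos : 0 ≤ (∫ y, (starRingEnd ℂ) (h y) * ∫ s, h s * Phi s y w ∂ν ∂ν).re := by
    rw [key]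
    have hre := integral_re hIk
    simp only [RCLike.re_to_complex] at hre
    rw [← hre]
    apply integral_nonneg_of_ae
    rw [hμ0]
    filter_upwards [ae_restrict_mem measurableSet_Ioi] with k hk
    rw [Complex.re_ofReal_mul]
    exact mul_nonneg (sq_nonneg _) (cc_re_nonneg w hw k hk)
  refine ⟨hpos, fun hyp => ?_⟩
  -- the kernel operator applied to h
  have hKsm : StronglyMeasurable (fun y => ∫ s, h s * Phi s y w ∂ν) :=
    ((hsm.comp_measurable measurable_snd).mul (Phi_sm' w)).integral_prod_right'
  have hKb : ∀ᵐ y ∂ν, ‖∫ s, h s * Phi s y w ∂ν‖ ≤ (∫ s, ‖h s‖ ∂ν) * CC x w := by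
    rw [hν]
    filter_upwards [ae_restrict_mem measurableSet_Ioc] with y hy
    calc ‖∫ s, h s * Phi s y w ∂ν‖ ≤ ∫ s, ‖h s‖ * CC x w ∂ν := by
          apply norm_integral_le_of_norm_le (hL1.norm.mul_const _)
          rw [hν]
          filter_upwards [ae_restrict_mem measurableSet_Ioc] with s hs
          rw [norm_mul]
          exact mul_le_mul_of_nonneg_left (Phi_norm_le x hx w hw s y hs hy) (norm_nonneg _)
      _ = (∫ s, ‖h s‖ ∂ν) * CC x w := integral_mul_const _ _
  have hKint : Integrable (fun y => (starRingEnd ℂ) (h y) * ∫ s, h s * Phi s y w ∂ν) ν := by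
    apply Integrable.mono' (hL1.norm.mul_const ((∫ s, ‖h s‖ ∂ν) * CC x w))
      ((hconj.mul hKsm).aestronglyMeasurable)
    filter_upwards [hKb] with y hy
    show ‖(starRingEnd ℂ) (h y) * ∫ s, h s * Phi s y w ∂ν‖
        ≤ ‖h y‖ * ((∫ s, ‖h s‖ ∂ν) * CC x w)
    rw [norm_mul, RCLike.norm_conj]
    exact mul_le_mul_of_nonneg_left hy (norm_nonneg _)
  have hnorm2 : Integrable (fun y => ‖h y‖ ^ 2) ν := (memLp_two_iff_integrable_sq_norm hh.1).mp hh
  have hAint : Integrable (fun y => (starRingEnd ℂ) (h y) * h y) ν := by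
    apply hnorm2.ofReal.congr
    refine Filter.Eventually.of_forall fun y => ?_
    show ((‖h y‖ ^ 2 : ℝ) : ℂ) = (starRingEnd ℂ) (h y) * h y
    rw [mul_comm, Complex.mul_conj, Complex.normSq_eq_norm_sq]
  have hzero : (∫ y, (starRingEnd ℂ) (h y) * (h y + ∫ s, h s * Phi s y w ∂ν) ∂ν) = 0 := by
    have hz : (fun y => (starRingEnd ℂ) (h y) * (h y + ∫ s, h s * Phi s y w ∂ν)) =ᵐ[ν]
        (fun _ => (0:ℂ)) := by
      filter_upwards [hyp] with y hy
      show (starRingEnd ℂ) (h y) * (h y + ∫ s, h s * Phi s y w ∂ν) = 0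
      rw [hy, mul_zero]
    rw [integral_congr_ae hz, integral_zero]
  have hsum : (∫ y, (starRingEnd ℂ) (h y) * (h y + ∫ s, h s * Phi s y w ∂ν) ∂ν)
      = (∫ y, (starRingEnd ℂ) (h y) * h y ∂ν)
        + ∫ y, (starRingEnd ℂ) (h y) * ∫ s, h s * Phi s y w ∂ν ∂ν := by
    rw [← integral_add hAint hKint]
    refine integral_congr_ae (Filter.Eventually.of_forall fun y => ?_)
    show (starRingEnd ℂ) (h y) * (h y + ∫ s, h s * Phi s y w ∂ν)
        = (starRingEnd ℂ) (h y) * h y + (starRingEnd ℂ) (h y) * ∫ s, h s * Phi s y w ∂ν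
    ring
  have hA : (∫ y, (starRingEnd ℂ) (h y) * h y ∂ν) = ((∫ y, ‖h y‖ ^ 2 ∂ν : ℝ) : ℂ) := by
    have h1 : (∫ y, (starRingEnd ℂ) (h y) * h y ∂ν) = ∫ y, ((‖h y‖ ^ 2 : ℝ) : ℂ) ∂ν := by
      refine integral_congr_ae (Filter.Eventually.of_forall fun y => ?_)
      show (starRingEnd ℂ) (h y) * h y = ((‖h y‖ ^ 2 : ℝ) : ℂ)
      rw [mul_comm, Complex.mul_conj, Complex.normSq_eq_norm_sq]
    rw [h1]
    exact integral_ofReal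
  have hfinal : (∫ y, ‖h y‖ ^ 2 ∂ν) = 0 := by
    have h0 : (0:ℝ) = (∫ y, ‖h y‖ ^ 2 ∂ν)
        + (∫ y, (starRingEnd ℂ) (h y) * ∫ s, h s * Phi s y w ∂ν ∂ν).re := by
      have := congrArg Complex.re (hzero.symm.trans hsum)
      rwa [hA, Complex.add_re, Complex.ofReal_re] at this
    have h1 : (∫ y, ‖h y‖ ^ 2 ∂ν) ≤ 0 := by linarith
    have h2 : (0:ℝ) ≤ ∫ y, ‖h y‖ ^ 2 ∂ν :=
      integral_nonneg fun y => sq_nonneg _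
    linarith
  have := (integral_eq_zero_iff_of_nonneg_ae
    (Filter.Eventually.of_forall fun y => sq_nonneg ‖h y‖) hnorm2).mp hfinal
  filter_upwards [this] with y hy
  have : ‖h y‖ ^ 2 = 0 := hy
  have : ‖h y‖ = 0 := by nlinarith [norm_nonneg (h y)]
  exact norm_eq_zero.mp this

end master

/-- **Positivity of the real part of the quadratic form of the kernel operator.** For
`x > 0`, `Re w > 0` and `h ∈ L²([0,x];ℂ)`:
`Re ∫₀^x conj(h(y)) (∫₀^x h(s)Φ(s,y,w) ds) dy ≥ 0`; consequently `Id + K_{x,w}` has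
trivial kernel. -/
theorem stmt_14 (x : ℝ) (hx : 0 < x) (w : ℂ) (hw : 0 < w.re)
    (h : ℝ → ℂ) (hh : MemLp h 2 (volume.restrict (Icc (0:ℝ) x))) :
    0 ≤ (∫ y in (0:ℝ)..x,
          (starRingEnd ℂ) (h y) * ∫ s in (0:ℝ)..x, h s * Phi s y w).re ∧
    ((∀ᵐ y ∂(volume.restrict (Icc (0:ℝ) x)),
        h y + (∫ s in (0:ℝ)..x, h s * Phi s y w) = 0) →
      ∀ᵐ y ∂(volume.restrict (Icc (0:ℝ) x)), h y = 0) := by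
  have hresIoc : volume.restrict (Ioc (0:ℝ) x) = volume.restrict (Icc (0:ℝ) x) :=
    Measure.restrict_congr_set Ioc_ae_eq_Icc
  set h' : ℝ → ℂ := hh.1.mk h with hh'
  have hsm : StronglyMeasurable h' := hh.1.stronglyMeasurable_mk
  have hae : h =ᵐ[volume.restrict (Icc (0:ℝ) x)] h' := hh.1.ae_eq_mk
  have hae' : h =ᵐ[volume.restrict (Ioc (0:ℝ) x)] h' := by rw [hresIoc]; exact hae
  have hh2 : MemLp h' 2 (volume.restrict (Ioc (0:ℝ) x)) := by
    rw [hresIoc]; exact hh.ae_eq hae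
  obtain ⟨hpos, hker⟩ := master hx hw hsm hh2
  have hinner : ∀ y : ℝ, (∫ s in (0:ℝ)..x, h s * Phi s y w)
      = ∫ s in Ioc (0:ℝ) x, h' s * Phi s y w := by
    intro y
    rw [intervalIntegral.integral_of_le hx.le]
    refine integral_congr_ae ?_
    filter_upwards [hae'] with s hs
    rw [hs]
  have houter : (∫ y in (0:ℝ)..x,
        (starRingEnd ℂ) (h y) * ∫ s in (0:ℝ)..x, h s * Phi s y w)
      = ∫ y in Ioc (0:ℝ) x,
        (starRingEnd ℂ) (h' y) * ∫ s in Ioc (0:ℝ) x, h' s * Phi s y w := by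
    rw [intervalIntegral.integral_of_le hx.le]
    refine integral_congr_ae ?_
    filter_upwards [hae'] with y hy
    rw [hinner y, hy]
  constructor
  · rw [houter]; exact hpos
  · intro hyp
    have hyp' : ∀ᵐ y ∂(volume.restrict (Ioc (0:ℝ) x)),
        h' y + (∫ s in Ioc (0:ℝ) x, h' s * Phi s y w) = 0 := by
      have hypIoc : ∀ᵐ y ∂(volume.restrict (Ioc (0:ℝ) x)),
          h y + (∫ s in (0:ℝ)..x, h s * Phi s y w) = 0 := by
        rw [hresIoc]; exact hyp
      filter_upwards [hypIoc, hae'] with y h1 h2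
      rw [← h2, ← hinner y]
      exact h1
    have hfin := hker hyp'
    rw [← hresIoc]
    filter_upwards [hae', hfin] with y h1 h2
    rw [h1]
    exact h2


end
end
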